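/- Let k ≥ 1 and let G be a finite graph with maximum degree at most k+1 satisfying: (A) no edge of G joins two vertices both of degree less than k+1; (B) no edge of G joins two vertices both of degree k+1; (C) every vertex adjacent to a vertex of degree k+1 has degree at most 2. Let G* be the graph whose vertex set is S = {v : deg_G(v) = k+1}, with distinct u, v ∈ S adjacent in G* if and only if there exists a vertex z of G with deg_G(z) = 2 such that uz and vz are both edges of G. Then E(G) can be partitioned into two (possibly empty) locally k-irregular parts if and only if G* is bipartite (equivalently, 2-colorable). -/

import Mathlib

open SimpleGraph

variable {V : Type*}

/-- The degree of a vertex `v` in an edge part `E`: the number of edges of `E` incident to `v`. -/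
noncomputable def partDeg (E : Set (Sym2 V)) (v : V) : ℕ :=
  {e ∈ E | v ∈ e}.ncard

/-- A part is a matching if no two of its edges share a vertex. -/
def IsMatchingPart (E : Set (Sym2 V)) : Prop :=
  ∀ e ∈ E, ∀ f ∈ E, e ≠ f → ∀ v : V, v ∈ e → v ∉ f

/-- A part is locally irregular if the endpoints of each of its edges have distinct degrees. -/
def IsLocallyIrregularPart (E : Set (Sym2 V)) : Prop :=
  ∀ u v : V, s(u, v) ∈ E → partDeg E u ≠ partDeg E v

/-- A part is locally regular if the endpoints of each of its edges have equal degrees. -/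
def IsLocallyRegularPart (E : Set (Sym2 V)) : Prop :=
  ∀ u v : V, s(u, v) ∈ E → partDeg E u = partDeg E v

/-- A part is regular if all vertices incident to one of its edges have the same degree `r ≥ 1`. -/
def IsRegularPart (E : Set (Sym2 V)) : Prop :=
  ∃ r : ℕ, 1 ≤ r ∧ ∀ v : V, (∃ e ∈ E, v ∈ e) → partDeg E v = r

/-- A part is `r`-regular if every vertex incident to one of its edges has degree `r` in it. -/
def IsRegularPartOfDeg (r : ℕ) (E : Set (Sym2 V)) : Prop :=
  ∀ v : V, (∃ e ∈ E, v ∈ e) → partDeg E v = r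

/-- A part is locally `k`-irregular if endpoint degrees of each edge differ by at least `k`. -/
def IsLocallyKIrregularPart (k : ℕ) (E : Set (Sym2 V)) : Prop :=
  ∀ u v : V, s(u, v) ∈ E → (k : ℤ) ≤ |(partDeg E u : ℤ) - (partDeg E v : ℤ)|

/-- The maximum degree of a finite graph. -/
noncomputable def maxDeg [Fintype V] (G : SimpleGraph V) : ℕ :=
  Finset.univ.sup fun v => partDeg G.edgeSet v

section Aux

variable {V : Type*} [Fintype V]

lemma partDeg_mono {E F : Set (Sym2 V)} (h : E ⊆ F) (v : V) :
    partDeg E v ≤ partDeg F v :=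
  Set.ncard_le_ncard (fun e he => ⟨h he.1, he.2⟩) (Set.toFinite _)

lemma one_le_partDeg {E : Set (Sym2 V)} {e : Sym2 V} {v : V} (he : e ∈ E) (hv : v ∈ e) :
    1 ≤ partDeg E v := by
  have hsub : ({e} : Set (Sym2 V)) ⊆ {f ∈ E | v ∈ f} := by
    intro f hf
    rw [Set.mem_singleton_iff] at hf
    subst hf
    exact ⟨he, hv⟩
  simpa [partDeg] using Set.ncard_le_ncard hsub (Set.toFinite _)

lemma two_le_partDeg {E : Set (Sym2 V)} {u u' v : V} (h : u ≠ u')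
    (h1 : s(u, v) ∈ E) (h2 : s(u', v) ∈ E) : 2 ≤ partDeg E v := by
  have hne : s(u, v) ≠ s(u', v) := by
    intro hh
    rw [Sym2.eq_iff] at hh
    rcases hh with ⟨h1, _⟩ | ⟨h1, h2⟩
    · exact h h1
    · exact h (h1.trans h2)
  have hsub : ({s(u, v), s(u', v)} : Set (Sym2 V)) ⊆ {f ∈ E | v ∈ f} := by
    intro f hf
    rcases hf with hf | hf <;> subst hf
    · exact ⟨h1, Sym2.mem_mk_right u v⟩
    · exact ⟨h2, Sym2.mem_mk_right u' v⟩
  calc 2 = ({s(u, v), s(u', v)} : Set (Sym2 V)).ncard := (Set.ncard_pair hne).symm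
    _ ≤ _ := Set.ncard_le_ncard hsub (Set.toFinite _)

/-- Saturation: in a locally k-irregular part containing at least one edge at a
degree-(k+1) vertex `c`, the part-degree of `c` is the full k+1. -/
lemma sat_deg (k : ℕ) (hk : 1 ≤ k) (G : SimpleGraph V)
    (hΔ : ∀ v : V, partDeg G.edgeSet v ≤ k + 1)
    (hB : ∀ u v : V, G.Adj u v →
      ¬(partDeg G.edgeSet u = k + 1 ∧ partDeg G.edgeSet v = k + 1))
    (hC : ∀ u v : V, G.Adj u v → partDeg G.edgeSet u = k + 1 →
      partDeg G.edgeSet v ≤ 2)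
    {E : Set (Sym2 V)} (hE : E ⊆ G.edgeSet) (hirr : IsLocallyKIrregularPart k E)
    {c w : V} (hc : partDeg G.edgeSet c = k + 1) (hcw : s(c, w) ∈ E) :
    partDeg E c = k + 1 := by
  have hadj : G.Adj c w := (SimpleGraph.mem_edgeSet G).mp (hE hcw)
  have hw2 : partDeg G.edgeSet w ≤ 2 := hC c w hadj hc
  have hwne : partDeg G.edgeSet w ≠ k + 1 := fun h => hB c w hadj ⟨hc, h⟩
  have hdc : partDeg E c ≤ k + 1 := hc ▸ partDeg_mono hE c
  have hdw : partDeg E w ≤ partDeg G.edgeSet w := partDeg_mono hE w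
  have h1c : 1 ≤ partDeg E c := one_le_partDeg hcw (Sym2.mem_mk_left c w)
  have h1w : 1 ≤ partDeg E w := one_le_partDeg hcw (Sym2.mem_mk_right c w)
  have habs := le_abs.mp (hirr c w hcw)
  omega

/-- Saturation, set form: every edge of `G` at `c` belongs to the part. -/
lemma sat_mem (k : ℕ) (hk : 1 ≤ k) (G : SimpleGraph V)
    (hΔ : ∀ v : V, partDeg G.edgeSet v ≤ k + 1)
    (hB : ∀ u v : V, G.Adj u v →
      ¬(partDeg G.edgeSet u = k + 1 ∧ partDeg G.edgeSet v = k + 1))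
    (hC : ∀ u v : V, G.Adj u v → partDeg G.edgeSet u = k + 1 →
      partDeg G.edgeSet v ≤ 2)
    {E : Set (Sym2 V)} (hE : E ⊆ G.edgeSet) (hirr : IsLocallyKIrregularPart k E)
    {c w : V} (hc : partDeg G.edgeSet c = k + 1) (hcw : s(c, w) ∈ E)
    {f : Sym2 V} (hf : f ∈ G.edgeSet) (hcf : c ∈ f) : f ∈ E := by
  have hsub : {e ∈ E | c ∈ e} ⊆ {e ∈ G.edgeSet | c ∈ e} := fun e he => ⟨hE he.1, he.2⟩
  have heq : {e ∈ E | c ∈ e} = {e ∈ G.edgeSet | c ∈ e} := by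
    apply Set.eq_of_subset_of_ncard_le hsub _ (Set.toFinite _)
    have h1 : partDeg E c = k + 1 := sat_deg k hk G hΔ hB hC hE hirr hc hcw
    show partDeg G.edgeSet c ≤ partDeg E c
    omega
  have : f ∈ {e ∈ E | c ∈ e} := heq ▸ (⟨hf, hcf⟩ : f ∈ {e ∈ G.edgeSet | c ∈ e})
  exact this.1

/-- Two edges from distinct degree-(k+1) vertices to a common degree-2 vertex cannot lie in the
same locally k-irregular part. -/
lemma no_two (k : ℕ) (hk : 1 ≤ k) (G : SimpleGraph V)
    (hΔ : ∀ v : V, partDeg G.edgeSet v ≤ k + 1)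
    (hB : ∀ u v : V, G.Adj u v →
      ¬(partDeg G.edgeSet u = k + 1 ∧ partDeg G.edgeSet v = k + 1))
    (hC : ∀ u v : V, G.Adj u v → partDeg G.edgeSet u = k + 1 →
      partDeg G.edgeSet v ≤ 2)
    {E : Set (Sym2 V)} (hE : E ⊆ G.edgeSet) (hirr : IsLocallyKIrregularPart k E)
    {u v z : V} (hu : partDeg G.edgeSet u = k + 1) (hne : u ≠ v)
    (hz : partDeg G.edgeSet z = 2)
    (h1 : s(u, z) ∈ E) (h2 : s(v, z) ∈ E) : False := by
  have hdu : partDeg E u = k + 1 := sat_deg k hk G hΔ hB hC hE hirr hu h1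
  have hdz2 : 2 ≤ partDeg E z := two_le_partDeg hne h1 h2
  have hdz2' : partDeg E z ≤ 2 := hz ▸ partDeg_mono hE z
  have habs := le_abs.mp (hirr u z h1)
  omega

end Aux

/-- for a graph of maximum degree at most k+1 satisfying conditions (A), (B), (C),
the edge set decomposes into two locally k-irregular parts iff the auxiliary graph G* (on the
vertices of degree k+1, joined when they have a common neighbour of degree 2) is 2-colorable. -/
theorem stmt_16 {V : Type*} [Fintype V] (k : ℕ) (hk : 1 ≤ k) (G : SimpleGraph V)
    (hΔ : ∀ v : V, partDeg G.edgeSet v ≤ k + 1)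
    (hA : ∀ u v : V, G.Adj u v →
      ¬(partDeg G.edgeSet u < k + 1 ∧ partDeg G.edgeSet v < k + 1))
    (hB : ∀ u v : V, G.Adj u v →
      ¬(partDeg G.edgeSet u = k + 1 ∧ partDeg G.edgeSet v = k + 1))
    (hC : ∀ u v : V, G.Adj u v → partDeg G.edgeSet u = k + 1 →
      partDeg G.edgeSet v ≤ 2) :
    (∃ E₁ E₂ : Set (Sym2 V),
        E₁ ∪ E₂ = G.edgeSet ∧ Disjoint E₁ E₂ ∧
        IsLocallyKIrregularPart k E₁ ∧ IsLocallyKIrregularPart k E₂) ↔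
      (SimpleGraph.fromRel fun u v =>
        partDeg G.edgeSet u = k + 1 ∧ partDeg G.edgeSet v = k + 1 ∧
        ∃ z : V, partDeg G.edgeSet z = 2 ∧ G.Adj u z ∧ G.Adj v z).Colorable 2 := by
  classical
  constructor
  · rintro ⟨E₁, E₂, hun, hdis, h1, h2⟩
    have hE₁ : E₁ ⊆ G.edgeSet := hun ▸ Set.subset_union_left
    have hE₂ : E₂ ⊆ G.edgeSet := hun ▸ Set.subset_union_right
    set C : V → Fin 2 := fun v => if ∃ e ∈ E₁, v ∈ e then 0 else 1 with hCdef
    have key : ∀ u v : V, u ≠ v →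
        (partDeg G.edgeSet u = k + 1 ∧ partDeg G.edgeSet v = k + 1 ∧
          ∃ z : V, partDeg G.edgeSet z = 2 ∧ G.Adj u z ∧ G.Adj v z) → C u ≠ C v := by
      rintro u v hne ⟨hu, hv, z, hz, huz, hvz⟩
      have euz : s(u, z) ∈ G.edgeSet := (SimpleGraph.mem_edgeSet G).mpr huz
      have evz : s(v, z) ∈ G.edgeSet := (SimpleGraph.mem_edgeSet G).mpr hvz
      have memu : s(u, z) ∈ E₁ ∪ E₂ := hun ▸ euz
      have memv : s(v, z) ∈ E₁ ∪ E₂ := hun ▸ evz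
      rcases memu with hu1 | hu2
      · have hv2 : s(v, z) ∈ E₂ := by
          rcases memv with hv1 | hv2
          · exact absurd hv1 fun hv1 =>
              no_two k hk G hΔ hB hC hE₁ h1 hu hne hz hu1 hv1
          · exact hv2
        have hCu : C u = 0 := by
          rw [hCdef]
          exact if_pos ⟨s(u, z), hu1, Sym2.mem_mk_left u z⟩
        have hCv : C v = 1 := by
          rw [hCdef]
          apply if_neg
          rintro ⟨f, hf1, hvf⟩
          obtain ⟨w, rfl⟩ := (Sym2.mem_iff_exists).mp hvf
          have : s(v, z) ∈ E₁ :=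
            sat_mem k hk G hΔ hB hC hE₁ h1 hv hf1 evz (Sym2.mem_mk_left v z)
          exact Set.disjoint_left.mp hdis this hv2
        rw [hCu, hCv]; decide
      · have hv1 : s(v, z) ∈ E₁ := by
          rcases memv with hv1 | hv2'
          · exact hv1
          · exact absurd hv2' fun hv2' =>
              no_two k hk G hΔ hB hC hE₂ h2 hu hne hz hu2 hv2'
        have hCv : C v = 0 := by
          rw [hCdef]
          exact if_pos ⟨s(v, z), hv1, Sym2.mem_mk_left v z⟩
        have hCu : C u = 1 := by
          rw [hCdef]
          apply if_neg
          rintro ⟨f, hf1, huf⟩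
          obtain ⟨w, rfl⟩ := (Sym2.mem_iff_exists).mp huf
          have : s(u, z) ∈ E₁ :=
            sat_mem k hk G hΔ hB hC hE₁ h1 hu hf1 euz (Sym2.mem_mk_left u z)
          exact Set.disjoint_left.mp hdis this hu2
        rw [hCu, hCv]; decide
    refine ⟨SimpleGraph.Coloring.mk C ?_⟩
    intro u v huv
    rw [fromRel_adj] at huv
    obtain ⟨hne, hrel | hrel⟩ := huv
    · exact key u v hne hrel
    · exact (key v u hne.symm hrel).symm
  · rintro ⟨C⟩
    -- the two parts, by the colour of the unique degree-(k+1) endpoint of each edge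
    set Ep : Fin 2 → Set (Sym2 V) := fun c =>
      {e ∈ G.edgeSet | ∃ u ∈ e, partDeg G.edgeSet u = k + 1 ∧ C u = c} with hEp
    -- each edge has a degree-(k+1) endpoint
    have hcenter : ∀ a b : V, G.Adj a b →
        partDeg G.edgeSet a = k + 1 ∨ partDeg G.edgeSet b = k + 1 := by
      intro a b hab
      have := hA a b hab
      have ha := hΔ a
      have hb := hΔ b
      omega
    -- core degree computation
    have core : ∀ (c : Fin 2) (u v : V), s(u, v) ∈ Ep c →
        partDeg G.edgeSet u = k + 1 → C u = c →
        partDeg (Ep c) u = k + 1 ∧ partDeg (Ep c) v = 1 := by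
      intro c u v hmem hu hCu
      have hGe : s(u, v) ∈ G.edgeSet := hmem.1
      have hadj : G.Adj u v := (SimpleGraph.mem_edgeSet G).mp hGe
      have hvnotc : partDeg G.edgeSet v ≠ k + 1 := fun h => hB u v hadj ⟨hu, h⟩
      constructor
      · have heq : {e ∈ Ep c | u ∈ e} = {e ∈ G.edgeSet | u ∈ e} := by
          apply Set.ext
          intro f
          constructor
          · rintro ⟨hf, hf2⟩; exact ⟨hf.1, hf2⟩
          · rintro ⟨hf, hf2⟩; exact ⟨⟨hf, u, hf2, hu, hCu⟩, hf2⟩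
        show ({e ∈ Ep c | u ∈ e}).ncard = k + 1
        rw [heq]; exact hu
      · have heq : {e ∈ Ep c | v ∈ e} = {s(u, v)} := by
          apply Set.ext
          intro f
          constructor
          · rintro ⟨⟨hfG, u', hu'f, hu'deg, hCu'⟩, hvf⟩
            obtain ⟨y, rfl⟩ := (Sym2.mem_iff_exists).mp hvf
            have hu'vy : u' = v ∨ u' = y := Sym2.mem_iff.mp hu'f
            have hu'ne : u' ≠ v := fun h => hvnotc (h ▸ hu'deg)
            have hu'y : u' = y := hu'vy.resolve_left hu'ne
            subst hu'y
            have hadj' : G.Adj v u' := (SimpleGraph.mem_edgeSet G).mp hfG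
            by_cases huu' : u' = u
            · subst huu'; rw [Set.mem_singleton_iff, Sym2.eq_swap]
            · exfalso
              have hv2 : partDeg G.edgeSet v = 2 := by
                have hle : partDeg G.edgeSet v ≤ 2 := hC u v hadj hu
                have hge : 2 ≤ partDeg G.edgeSet v := by
                  apply two_le_partDeg (Ne.symm huu') hGe
                  rw [Sym2.eq_swap]; exact hfG
                omega
              have hrel : (SimpleGraph.fromRel fun u v =>
                  partDeg G.edgeSet u = k + 1 ∧ partDeg G.edgeSet v = k + 1 ∧
                  ∃ z : V, partDeg G.edgeSet z = 2 ∧ G.Adj u z ∧ G.Adj v z).Adj u u' := by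
                rw [fromRel_adj]
                exact ⟨Ne.symm huu', Or.inl ⟨hu, hu'deg, v, hv2, hadj, hadj'.symm⟩⟩
              exact C.valid hrel (hCu.trans hCu'.symm)
          · intro hf
            rw [Set.mem_singleton_iff] at hf
            subst hf
            exact ⟨⟨hGe, u, Sym2.mem_mk_left u v, hu, hCu⟩, Sym2.mem_mk_right u v⟩
        show ({e ∈ Ep c | v ∈ e}).ncard = 1
        rw [heq, Set.ncard_singleton]
    -- each part is locally k-irregular
    have hirr : ∀ c : Fin 2, IsLocallyKIrregularPart k (Ep c) := by
      intro c u v hmem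
      obtain ⟨hGe, w, hwmem, hwdeg, hwc⟩ := hmem
      have hmem : s(u, v) ∈ Ep c := ⟨hGe, w, hwmem, hwdeg, hwc⟩
      rcases Sym2.mem_iff.mp hwmem with rfl | rfl
      · obtain ⟨du, dv⟩ := core c w v hmem hwdeg hwc
        rw [du, dv]
        push_cast
        rw [add_sub_cancel_right]
        exact le_abs_self _
      · have hmem' : s(w, u) ∈ Ep c := by rw [Sym2.eq_swap]; exact hmem
        obtain ⟨dv, du⟩ := core c w u hmem' hwdeg hwc
        rw [du, dv, abs_sub_comm]
        push_cast
        rw [add_sub_cancel_right]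
        exact le_abs_self _
    refine ⟨Ep 0, Ep 1, ?_, ?_, hirr 0, hirr 1⟩
    · apply Set.Subset.antisymm
      · rintro e (he | he) <;> exact he.1
      · intro e he
        induction e using Sym2.ind with
        | _ a b =>
          have hadj : G.Adj a b := (SimpleGraph.mem_edgeSet G).mp he
          rcases hcenter a b hadj with hca | hcb
          · rcases (show C a = 0 ∨ C a = 1 by omega) with h | h
            · exact Or.inl ⟨he, a, Sym2.mem_mk_left a b, hca, h⟩
            · exact Or.inr ⟨he, a, Sym2.mem_mk_left a b, hca, h⟩
          · rcases (show C b = 0 ∨ C b = 1 by omega) with h | h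
            · exact Or.inl ⟨he, b, Sym2.mem_mk_right a b, hcb, h⟩
            · exact Or.inr ⟨he, b, Sym2.mem_mk_right a b, hcb, h⟩
    · rw [Set.disjoint_left]
      intro e he0 he1
      induction e using Sym2.ind with
      | _ a b =>
        obtain ⟨heG, u0, hu0, hd0, hc0⟩ := he0
        obtain ⟨-, u1, hu1, hd1, hc1⟩ := he1
        have hadj : G.Adj a b := (SimpleGraph.mem_edgeSet G).mp heG
        have hnb := hB a b hadj
        have h0 := Sym2.mem_iff.mp hu0
        have h1 := Sym2.mem_iff.mp hu1
        have heq : u0 = u1 := by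
          rcases h0 with rfl | rfl <;> rcases h1 with rfl | rfl
          · rfl
          · exact absurd ⟨hd0, hd1⟩ hnb
          · exact absurd ⟨hd1, hd0⟩ hnb
          · rfl
        rw [heq, hc1] at hc0
        exact absurd hc0 (by decide)
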